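/- arXiv:2512.03604 — 3 statements merged into one kernel-verified Lean document; each statement's English description precedes it below -/
import Mathlib

section
/- Let P and Q be symmetric positive definite n×n real matrices, with smallest eigenvalue λ_min(Q) of Q and largest eigenvalue λ_max(P) of P. If x, e ∈ ℝⁿ satisfy the directional triggering condition 2 xᵀ P B K e ≤ σ xᵀ P x, then -xᵀ Q x + 2 xᵀ P B K e ≤ -(λ_min(Q) - σ λ_max(P)) ‖x‖². Consequently, if σ < λ_min(Q)/λ_max(P), then -xᵀ Q x + 2 xᵀ P B K e < 0 for every x ≠ 0. -/
open Matrix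

lemma quad_eq_sum {n : ℕ} {A : Matrix (Fin n) (Fin n) ℝ} (hA : A.IsHermitian)
    (x : Fin n → ℝ) :
    x ⬝ᵥ (A *ᵥ x) = ∑ i, hA.eigenvalues i *
      ((star (hA.eigenvectorUnitary : Matrix (Fin n) (Fin n) ℝ) *ᵥ x) i)^2 := by
  set U : Matrix (Fin n) (Fin n) ℝ := (hA.eigenvectorUnitary : Matrix (Fin n) (Fin n) ℝ)
  set y := star U *ᵥ x with hy
  have hspec := hA.spectral_theorem
  calc x ⬝ᵥ (A *ᵥ x)
      = x ⬝ᵥ ((U * diagonal (RCLike.ofReal ∘ hA.eigenvalues) * star U) *ᵥ x) := by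
        exact congrArg (fun M => x ⬝ᵥ (M *ᵥ x)) hspec
    _ = (vecMul x U) ⬝ᵥ (diagonal (RCLike.ofReal ∘ hA.eigenvalues) *ᵥ y) := by
        rw [← mulVec_mulVec, ← mulVec_mulVec, dotProduct_mulVec]
    _ = y ⬝ᵥ (diagonal (RCLike.ofReal ∘ hA.eigenvalues) *ᵥ y) := by
        congr 1
        rw [hy]
        ext i
        simp [vecMul, mulVec, dotProduct, conjTranspose_apply, mul_comm]
    _ = ∑ i, hA.eigenvalues i * (y i)^2 := by
        simp [dotProduct, mulVec_diagonal, pow_two]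
        exact Finset.sum_congr rfl fun i _ => by ring

lemma norm_sq_eq_sum_sq {n : ℕ} {A : Matrix (Fin n) (Fin n) ℝ} (hA : A.IsHermitian)
    (x : Fin n → ℝ) :
    x ⬝ᵥ x = ∑ i, ((star (hA.eigenvectorUnitary : Matrix (Fin n) (Fin n) ℝ) *ᵥ x) i)^2 := by
  set U : Matrix (Fin n) (Fin n) ℝ := (hA.eigenvectorUnitary : Matrix (Fin n) (Fin n) ℝ)
  have hU : U * star U = 1 := Matrix.mem_unitaryGroup_iff.mp hA.eigenvectorUnitary.2
  have : (star U *ᵥ x) ⬝ᵥ (star U *ᵥ x) = x ⬝ᵥ x := by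
    have hsU : star U = Uᵀ := by
      ext i j; simp [conjTranspose_apply]
    rw [dotProduct_mulVec, hsU, vecMul_transpose, mulVec_mulVec, ← hsU, hU, one_mulVec]
  rw [← this]
  simp [dotProduct, pow_two]

lemma quad_lower {n : ℕ} {A : Matrix (Fin n) (Fin n) ℝ} (hA : A.IsHermitian)
    (x : Fin n → ℝ) :
    (⨅ i, hA.eigenvalues i) * (x ⬝ᵥ x) ≤ x ⬝ᵥ (A *ᵥ x) := by
  rw [quad_eq_sum hA x, norm_sq_eq_sum_sq hA x, Finset.mul_sum]
  refine Finset.sum_le_sum fun i _ => ?_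
  have h1 : (⨅ i, hA.eigenvalues i) ≤ hA.eigenvalues i :=
    ciInf_le (Finite.bddBelow_range _) i
  exact mul_le_mul_of_nonneg_right h1 (sq_nonneg _)

lemma quad_upper {n : ℕ} {A : Matrix (Fin n) (Fin n) ℝ} (hA : A.IsHermitian)
    (x : Fin n → ℝ) :
    x ⬝ᵥ (A *ᵥ x) ≤ (⨆ i, hA.eigenvalues i) * (x ⬝ᵥ x) := by
  rw [quad_eq_sum hA x, norm_sq_eq_sum_sq hA x, Finset.mul_sum]
  refine Finset.sum_le_sum fun i _ => ?_
  have h1 : hA.eigenvalues i ≤ (⨆ i, hA.eigenvalues i) :=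
    le_ciSup (Finite.bddAbove_range _) i
  exact mul_le_mul_of_nonneg_right h1 (sq_nonneg _)

/-- **Decay bound under the directional triggering condition.**
If the directional triggering condition `2 xᵀ P B K e ≤ σ xᵀ P x` holds, then
`-xᵀ Q x + 2 xᵀ P B K e ≤ -(λ_min(Q) - σ λ_max(P)) ‖x‖²`; consequently, if
`σ < λ_min(Q)/λ_max(P)` then this quantity is strictly negative for every `x ≠ 0`. -/
theorem directional_trigger_decay_bound {n m : ℕ}
    (A : Matrix (Fin n) (Fin n) ℝ) (B : Matrix (Fin n) (Fin m) ℝ)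
    (K : Matrix (Fin m) (Fin n) ℝ) (P Q : Matrix (Fin n) (Fin n) ℝ)
    (hP : P.PosDef) (hQ : Q.PosDef) (σ : ℝ) (hσ : σ ∈ Set.Ioo (0 : ℝ) 1)
    (x e : EuclideanSpace ℝ (Fin n))
    (htrig : 2 * (x ⬝ᵥ ((P * B * K) *ᵥ e)) ≤ σ * (x ⬝ᵥ (P *ᵥ x))) :
    (-(x ⬝ᵥ (Q *ᵥ x)) + 2 * (x ⬝ᵥ ((P * B * K) *ᵥ e))
        ≤ -((⨅ i, hQ.isHermitian.eigenvalues i) - σ * ⨆ i, hP.isHermitian.eigenvalues i)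
            * ‖x‖ ^ 2) ∧
    (σ < (⨅ i, hQ.isHermitian.eigenvalues i) / (⨆ i, hP.isHermitian.eigenvalues i) →
      x ≠ 0 → -(x ⬝ᵥ (Q *ᵥ x)) + 2 * (x ⬝ᵥ ((P * B * K) *ᵥ e)) < 0) := by
  obtain ⟨hσ0, hσ1⟩ := hσ
  set lQ := ⨅ i, hQ.isHermitian.eigenvalues i with hlQdef
  set lP := ⨆ i, hP.isHermitian.eigenvalues i with hlPdef
  have hn : ‖x‖ ^ 2 = x ⬝ᵥ x := by
    rw [← real_inner_self_eq_norm_sq]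
    simp only [PiLp.inner_apply, dotProduct]
    simp [mul_comm, pow_two]
  have hQl : lQ * (x ⬝ᵥ x) ≤ x ⬝ᵥ (Q *ᵥ x) := quad_lower hQ.isHermitian x
  have hPu : x ⬝ᵥ (P *ᵥ x) ≤ lP * (x ⬝ᵥ x) := quad_upper hP.isHermitian x
  have hσP : σ * (x ⬝ᵥ (P *ᵥ x)) ≤ σ * (lP * (x ⬝ᵥ x)) :=
    mul_le_mul_of_nonneg_left hPu hσ0.le
  have h1 : -(x ⬝ᵥ (Q *ᵥ x)) + 2 * (x ⬝ᵥ ((P * B * K) *ᵥ e))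
      ≤ -(lQ - σ * lP) * ‖x‖ ^ 2 := by
    rw [hn]; nlinarith [htrig]
  refine ⟨h1, fun hdiv hx => ?_⟩
  have hxs : 0 < ‖x‖ ^ 2 := pow_pos (norm_pos_iff.mpr hx) 2
  have hne : Nonempty (Fin n) := by
    rcases isEmpty_or_nonempty (Fin n) with h | h
    · exact absurd (Subsingleton.elim x 0) hx
    · exact h
  have hlP : 0 < lP :=
    lt_of_lt_of_le (hP.eigenvalues_pos (Classical.arbitrary _))
      (le_ciSup (Finite.bddAbove_range _) _)
  have hσlP : σ * lP < lQ := (lt_div_iff₀ hlP).mp hdiv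
  have : -(lQ - σ * lP) * ‖x‖ ^ 2 < 0 :=
    mul_neg_of_neg_of_pos (by linarith) hxs
  linarith
end

section
/- Assume P B K ≠ 0 and define Γ = σ λ_min(P) / (2 ‖P B K‖), where ‖P B K‖ is the operator norm of the matrix P B K on Euclidean space. If x, e ∈ ℝⁿ with x ≠ 0 satisfy ‖e‖ < Γ ‖x‖, then 2 xᵀ P B K e < σ xᵀ P x; that is, the directional triggering condition does not fire whenever the error-to-state norm ratio is below Γ. -/
open Matrix

noncomputable def euclideanOpNorm {n : ℕ} (M : Matrix (Fin n) (Fin n) ℝ) : ℝ :=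
  ‖LinearMap.toContinuousLinearMap (Matrix.toEuclideanLin M)‖

lemma dotProduct_eq_inner' {n : ℕ} (x y : EuclideanSpace ℝ (Fin n)) :
    (x : Fin n → ℝ) ⬝ᵥ (y : Fin n → ℝ) = (inner ℝ x y : ℝ) := by
  simp [PiLp.inner_apply, dotProduct, RCLike.inner_apply, mul_comm]

lemma toEuclideanLin_coe' {n : ℕ} (M : Matrix (Fin n) (Fin n) ℝ)
    (v : EuclideanSpace ℝ (Fin n)) :
    ((Matrix.toEuclideanLin M v : EuclideanSpace ℝ (Fin n)) : Fin n → ℝ) = M *ᵥ v := by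
  simp [Matrix.toEuclideanLin_apply]

lemma min_eig_bound' {n : ℕ} {P : Matrix (Fin n) (Fin n) ℝ} (hP : P.PosDef) (μ : ℝ)
    (hμ : ∀ i, μ ≤ hP.isHermitian.eigenvalues i) (x : Fin n → ℝ) :
    μ * (x ⬝ᵥ x) ≤ x ⬝ᵥ (P *ᵥ x) := by
  classical
  set hH := hP.isHermitian
  set U : Matrix (Fin n) (Fin n) ℝ := (hH.eigenvectorUnitary : Matrix (Fin n) (Fin n) ℝ)
  have hQ : (P - μ • (1 : Matrix (Fin n) (Fin n) ℝ)) =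
      U * Matrix.diagonal (fun i => hH.eigenvalues i - μ) * Uᴴ := by
    have hsp : P = U * Matrix.diagonal (RCLike.ofReal ∘ hH.eigenvalues) * star U := hH.spectral_theorem
    have hU1 : U * star U = 1 := (Matrix.mem_unitaryGroup_iff).mp hH.eigenvectorUnitary.2
    have h1 : μ • (1 : Matrix (Fin n) (Fin n) ℝ) = U * (μ • 1) * star U := by
      rw [Matrix.mul_smul, Matrix.smul_mul, Matrix.mul_one, hU1]
    calc P - μ • (1 : Matrix (Fin n) (Fin n) ℝ)
        = U * Matrix.diagonal (RCLike.ofReal ∘ hH.eigenvalues) * star U - U * (μ • 1) * star U := by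
          rw [← hsp, ← h1]
      _ = U * (Matrix.diagonal (RCLike.ofReal ∘ hH.eigenvalues) - μ • 1) * star U := by
          rw [Matrix.mul_sub, Matrix.sub_mul]
      _ = U * Matrix.diagonal (fun i => hH.eigenvalues i - μ) * Uᴴ := by
          rw [Matrix.star_eq_conjTranspose]
          congr 2
          ext i j
          by_cases h : i = j <;> simp [Matrix.diagonal, Matrix.one_apply, h]
  have hpsd : (P - μ • (1 : Matrix (Fin n) (Fin n) ℝ)).PosSemidef := by
    rw [hQ]
    exact (Matrix.PosSemidef.diagonal (fun i => sub_nonneg.mpr (hμ i))).mul_mul_conjTranspose_same U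
  have := hpsd.dotProduct_mulVec_nonneg x
  simp only [star_trivial, Matrix.sub_mulVec, Matrix.smul_mulVec, Matrix.one_mulVec,
    dotProduct_sub, dotProduct_smul, smul_eq_mul] at this
  linarith

/-- **Sufficient condition for non-firing of the directional trigger.**
With `Γ = σ λ_min(P) / (2 ‖P B K‖)`, if `x ≠ 0` and `‖e‖ < Γ ‖x‖`, then
`2 xᵀ P B K e < σ xᵀ P x`, i.e. the directional triggering condition does not fire. -/
theorem trigger_not_firing_below_ratio {n m : ℕ}
    (A : Matrix (Fin n) (Fin n) ℝ) (B : Matrix (Fin n) (Fin m) ℝ)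
    (K : Matrix (Fin m) (Fin n) ℝ) (P : Matrix (Fin n) (Fin n) ℝ)
    (hP : P.PosDef) (σ : ℝ) (hσ : σ ∈ Set.Ioo (0 : ℝ) 1)
    (hPBK : P * B * K ≠ 0)
    (x e : EuclideanSpace ℝ (Fin n)) (hx : x ≠ 0)
    (he : ‖e‖ < (σ * (⨅ i, hP.isHermitian.eigenvalues i)
      / (2 * euclideanOpNorm (P * B * K))) * ‖x‖) :
    2 * (x ⬝ᵥ ((P * B * K) *ᵥ e)) < σ * (x ⬝ᵥ (P *ᵥ x)) := by
  rcases Nat.eq_zero_or_pos n with hn | hn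
  · subst hn
    exact absurd (by ext i; exact i.elim0) hx
  haveI : Nonempty (Fin n) := ⟨⟨0, hn⟩⟩
  set M : Matrix (Fin n) (Fin n) ℝ := P * B * K with hM
  set μ : ℝ := ⨅ i, hP.isHermitian.eigenvalues i with hμdef
  set c : ℝ := euclideanOpNorm M with hcdef
  have hμle : ∀ i, μ ≤ hP.isHermitian.eigenvalues i :=
    fun i => ciInf_le (Finite.bddBelow_range _) i
  have hμpos : 0 < μ := by
    obtain ⟨i0, hi0⟩ := Finite.exists_min hP.isHermitian.eigenvalues
    exact lt_of_lt_of_le (hP.eigenvalues_pos i0) (le_ciInf hi0)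
  have hc : 0 < c := by
    rw [hcdef, euclideanOpNorm, norm_pos_iff]
    intro h
    apply hPBK
    have h2 : Matrix.toEuclideanLin M = 0 := by
      apply LinearMap.toContinuousLinearMap.injective
      simpa using h
    simpa using Matrix.toEuclideanLin.injective (by simp [h2])
  have hx0 : 0 < ‖x‖ := norm_pos_iff.mpr hx
  have he0 : 0 ≤ ‖e‖ := norm_nonneg e
  set T := LinearMap.toContinuousLinearMap (Matrix.toEuclideanLin M) with hT
  have hdot : x ⬝ᵥ (M *ᵥ e) ≤ ‖x‖ * (c * ‖e‖) := by
    have h1 : x ⬝ᵥ (M *ᵥ e) = (inner ℝ x (T e) : ℝ) := by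
      rw [← dotProduct_eq_inner', ← toEuclideanLin_coe' M e]
      rfl
    calc x ⬝ᵥ (M *ᵥ e) = (inner ℝ x (T e) : ℝ) := h1
      _ ≤ ‖x‖ * ‖T e‖ := real_inner_le_norm x (T e)
      _ ≤ ‖x‖ * (c * ‖e‖) := by
          have := T.le_opNorm e
          exact mul_le_mul_of_nonneg_left (by simpa [hcdef, euclideanOpNorm] using this)
            (norm_nonneg x)
  have hP2 : μ * ‖x‖ ^ 2 ≤ x ⬝ᵥ (P *ᵥ x) := by
    have := min_eig_bound' hP μ hμle x
    rwa [dotProduct_eq_inner' x x, real_inner_self_eq_norm_sq] at this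
  have hmid : 2 * (‖x‖ * (c * ‖e‖)) < σ * (μ * ‖x‖ ^ 2) := by
    have h2 : ‖e‖ < σ * μ / (2 * c) * ‖x‖ := he
    have := mul_lt_mul_of_pos_left h2 (by positivity : (0:ℝ) < 2 * (‖x‖ * c))
    calc 2 * (‖x‖ * (c * ‖e‖)) = 2 * (‖x‖ * c) * ‖e‖ := by ring
      _ < 2 * (‖x‖ * c) * (σ * μ / (2 * c) * ‖x‖) := this
      _ = σ * (μ * ‖x‖ ^ 2) := by field_simp
  have hσμ : 0 < σ := hσ.1
  nlinarith [hdot, hmid, hP2]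
end

section
/- Let L₁ = ‖B K‖, L₂ = ‖A_cl‖ + ‖B K‖, L₃ = ‖A_cl‖ (operator norms). Suppose x, e : ℝ → ℝⁿ are differentiable at t with x'(t) = A_cl x(t) + B K e(t) and e'(t) = A_cl x(t) + B K e(t), and x(t) ≠ 0, e(t) ≠ 0. Then the ratio ξ(s) = ‖e(s)‖/‖x(s)‖ is differentiable at t and satisfies ξ'(t) ≤ L₁ ξ(t)² + L₂ ξ(t) + L₃. -/
open Matrix

private lemma hasDerivAt_norm_aux {F : Type*} [NormedAddCommGroup F]
    [InnerProductSpace ℝ F] {f : ℝ → F} {f' : F} {t : ℝ}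
    (hf : HasDerivAt f f' t) (h0 : f t ≠ 0) :
    HasDerivAt (fun s => ‖f s‖) ((inner ℝ (f t) f' : ℝ) / ‖f t‖) t := by
  have hsq : HasDerivAt (‖f ·‖ ^ 2) (2 * (inner ℝ (f t) f' : ℝ)) t := hf.norm_sq
  have hne : (‖f ·‖ ^ 2) t ≠ 0 := by
    simpa using pow_ne_zero 2 (norm_ne_zero_iff.2 h0)
  have h := hsq.sqrt hne
  have heq : (fun s => Real.sqrt ((‖f ·‖ ^ 2) s)) = fun s => ‖f s‖ := by
    funext s
    simp [Real.sqrt_sq (norm_nonneg (f s))]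
  rw [heq] at h
  convert h using 1
  rw [Real.sqrt_sq (norm_nonneg (f t))]
  ring

private lemma mulVec_norm_le {n : ℕ} (M : Matrix (Fin n) (Fin n) ℝ)
    (v : EuclideanSpace ℝ (Fin n)) :
    ‖Matrix.toEuclideanLin M v‖ ≤ euclideanOpNorm M * ‖v‖ :=
  (LinearMap.toContinuousLinearMap (Matrix.toEuclideanLin M)).le_opNorm v

set_option maxHeartbeats 1000000 in
/-- **Differential inequality for the error-to-state ratio.**
With `L₁ = ‖B K‖`, `L₂ = ‖A_cl‖ + ‖B K‖`, `L₃ = ‖A_cl‖`, if both `x` and `e`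
satisfy the closed-loop dynamics `x' = e' = A_cl x + B K e` at `t` and
`x(t) ≠ 0`, `e(t) ≠ 0`, then `ξ(s) = ‖e(s)‖/‖x(s)‖` is differentiable at `t` and
its derivative satisfies `ξ'(t) ≤ L₁ ξ(t)² + L₂ ξ(t) + L₃`. -/
theorem ratio_differential_inequality {n m : ℕ}
    (A : Matrix (Fin n) (Fin n) ℝ) (B : Matrix (Fin n) (Fin m) ℝ)
    (K : Matrix (Fin m) (Fin n) ℝ)
    (x e : ℝ → EuclideanSpace ℝ (Fin n)) (t : ℝ)
    (hx : HasDerivAt x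
      ((WithLp.toLp 2 ((A - B * K) *ᵥ x t + (B * K) *ᵥ e t) : EuclideanSpace ℝ (Fin n))) t)
    (he : HasDerivAt e
      ((WithLp.toLp 2 ((A - B * K) *ᵥ x t + (B * K) *ᵥ e t) : EuclideanSpace ℝ (Fin n))) t)
    (hxne : x t ≠ 0) (hene : e t ≠ 0) :
    let L₁ : ℝ := euclideanOpNorm (B * K)
    let L₂ : ℝ := euclideanOpNorm (A - B * K) + euclideanOpNorm (B * K)
    let L₃ : ℝ := euclideanOpNorm (A - B * K)
    let ξ : ℝ → ℝ := fun s => ‖e s‖ / ‖x s‖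
    ∃ d : ℝ, HasDerivAt ξ d t ∧ d ≤ L₁ * ξ t ^ 2 + L₂ * ξ t + L₃ := by
  intro L₁ L₂ L₃ ξ
  set v : EuclideanSpace ℝ (Fin n) :=
    (WithLp.toLp 2 ((A - B * K) *ᵥ x t + (B * K) *ᵥ e t) : EuclideanSpace ℝ (Fin n)) with hv
  have hNx : HasDerivAt (fun s => ‖x s‖) ((inner ℝ (x t) v : ℝ) / ‖x t‖) t :=
    hasDerivAt_norm_aux hx hxne
  have hNe : HasDerivAt (fun s => ‖e s‖) ((inner ℝ (e t) v : ℝ) / ‖e t‖) t :=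
    hasDerivAt_norm_aux he hene
  have hxpos : (0:ℝ) < ‖x t‖ := norm_pos_iff.2 hxne
  have hepos : (0:ℝ) < ‖e t‖ := norm_pos_iff.2 hene
  have hxne' : ‖x t‖ ≠ 0 := ne_of_gt hxpos
  have hξ := hNe.div hNx hxne'
  refine ⟨_, hξ, ?_⟩
  set de : ℝ := (inner ℝ (e t) v : ℝ) / ‖e t‖
  set dx : ℝ := (inner ℝ (x t) v : ℝ) / ‖x t‖
  have hde : de ≤ ‖v‖ := by
    rw [div_le_iff₀ hepos]
    calc (inner ℝ (e t) v : ℝ) ≤ ‖e t‖ * ‖v‖ := real_inner_le_norm _ _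
      _ = ‖v‖ * ‖e t‖ := by ring
  have hdx : -‖v‖ ≤ dx := by
    rw [le_div_iff₀ hxpos]
    have := abs_real_inner_le_norm (x t) v
    have h1 : -(‖x t‖ * ‖v‖) ≤ (inner ℝ (x t) v : ℝ) := neg_le_of_abs_le this
    nlinarith
  have hvle : ‖v‖ ≤ L₃ * ‖x t‖ + L₁ * ‖e t‖ := by
    have hv' : v = Matrix.toEuclideanLin (A - B * K) (x t) +
        Matrix.toEuclideanLin (B * K) (e t) := rfl
    rw [hv']
    calc ‖Matrix.toEuclideanLin (A - B * K) (x t) + Matrix.toEuclideanLin (B * K) (e t)‖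
        ≤ ‖Matrix.toEuclideanLin (A - B * K) (x t)‖ + ‖Matrix.toEuclideanLin (B * K) (e t)‖ :=
          norm_add_le _ _
      _ ≤ L₃ * ‖x t‖ + L₁ * ‖e t‖ :=
        add_le_add (mulVec_norm_le _ _) (mulVec_norm_le _ _)
  have hvnn : (0:ℝ) ≤ ‖v‖ := norm_nonneg _
  have hL₁ : (0:ℝ) ≤ L₁ := norm_nonneg _
  have hL₃ : (0:ℝ) ≤ L₃ := norm_nonneg _
  show (de * ‖x t‖ - ‖e t‖ * dx) / ‖x t‖ ^ 2 ≤
    L₁ * (‖e t‖ / ‖x t‖) ^ 2 + L₂ * (‖e t‖ / ‖x t‖) + L₃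
  have hL₂ : L₂ = L₃ + L₁ := rfl
  rw [hL₂, div_le_iff₀ (by positivity)]
  have key : (L₁ * (‖e t‖ / ‖x t‖) ^ 2 + (L₃ + L₁) * (‖e t‖ / ‖x t‖) + L₃) * ‖x t‖ ^ 2
      = L₁ * ‖e t‖ ^ 2 + (L₃ + L₁) * ‖e t‖ * ‖x t‖ + L₃ * ‖x t‖ ^ 2 := by
    field_simp
  rw [key]
  have hdx' : -dx ≤ ‖v‖ := by linarith
  nlinarith [mul_le_mul hde (le_refl ‖x t‖) hxpos.le hvnn,
    mul_le_mul hdx' (le_refl ‖e t‖) hepos.le hvnn,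
    mul_le_mul hvle (le_refl (‖x t‖ + ‖e t‖)) (by positivity) (by positivity)]
end
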